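/- With M = B + 2λ A B^{1/2} 𝟙𝟙ᵀ as above, if c is an eigenvalue of M with c ∉ {b_1,...,b_n}, then the vector v with v_k = a_k √(b_k)/(c - b_k) is an eigenvector of M for the eigenvalue c. -/

import Mathlib

open Matrix

/-- if `c` is an eigenvalue of `M = B + 2λ A B^{1/2} 𝟙𝟙ᵀ` with
`c ∉ {b₁,…,bₙ}`, then `v` with `vₖ = aₖ √(bₖ)/(c - bₖ)` is a corresponding eigenvector. -/
theorem stmt11 (n : ℕ) (hn : 1 ≤ n) (a b : Fin n → ℝ) (lam : ℝ)
    (ha : ∀ i, 0 < a i) (hb : ∀ i, 0 < b i) (hbdist : Function.Injective b) (hlam : 0 < lam)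
    (M : Matrix (Fin n) (Fin n) ℝ)
    (hM : ∀ i j, M i j = (if i = j then b i else 0) + 2 * lam * a i * Real.sqrt (b i))
    (c : ℝ) (hcb : ∀ i, c ≠ b i)
    (hc : (M - c • (1 : Matrix (Fin n) (Fin n) ℝ)).det = 0)
    (v : Fin n → ℝ) (hv : ∀ k, v k = a k * Real.sqrt (b k) / (c - b k)) :
    M.mulVec v = c • v ∧ v ≠ 0 := by
  set w : Fin n → ℝ := fun i => 2 * lam * a i * Real.sqrt (b i) with hw
  have hcb' : ∀ i, c - b i ≠ 0 := fun i => sub_ne_zero.mpr (hcb i)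
  have hbc' : ∀ i, b i - c ≠ 0 := fun i => sub_ne_zero.mpr (Ne.symm (hcb i))
  have hMeq : M - c • (1 : Matrix (Fin n) (Fin n) ℝ)
      = Matrix.diagonal (fun i => b i - c)
        + Matrix.replicateCol Unit w * Matrix.replicateRow Unit (fun _ => (1 : ℝ)) := by
    ext i j
    by_cases h : i = j <;>
      simp [hM, Matrix.diagonal, Matrix.one_apply, Matrix.mul_apply, Matrix.replicateCol, Matrix.replicateRow,
        w, h] <;> ring
  have hdet : IsUnit (Matrix.diagonal (fun i => b i - c)).det := by
    rw [Matrix.det_diagonal]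
    exact isUnit_iff_ne_zero.mpr (Finset.prod_ne_zero_iff.mpr fun i _ => hbc' i)
  have h1 := Matrix.det_add_replicateCol_mul_replicateRow (ι := Unit) hdet w (fun _ => (1 : ℝ))
  rw [hMeq, h1] at hc
  have h2 : ((1 : Matrix Unit Unit ℝ) + (Matrix.replicateRow Unit (fun _ => (1 : ℝ)) : Matrix Unit (Fin n) ℝ)
      * (Matrix.diagonal fun i => b i - c)⁻¹ * Matrix.replicateCol Unit w).det = 0 := by
    rcases mul_eq_zero.mp hc with h | h
    · exact absurd h hdet.ne_zero
    · exact h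
  have hsum : 1 + ∑ i, (b i - c)⁻¹ * w i = 0 := by
    rw [Matrix.det_unique] at h2
    have hinv : (Matrix.diagonal (fun i => b i - c))⁻¹
        = Matrix.diagonal (fun i => (b i - c)⁻¹) := by
      apply Matrix.inv_eq_right_inv
      rw [Matrix.diagonal_mul_diagonal]
      convert Matrix.diagonal_one with i
      exact mul_inv_cancel₀ (hbc' i)
    rw [hinv] at h2
    simpa [Matrix.mul_apply, Matrix.replicateRow, Matrix.replicateCol, Ring.inverse_eq_inv',
      Matrix.diagonal_apply, Matrix.one_apply, ite_mul, mul_ite, Finset.sum_ite_eq, Pi.inv_apply,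
      Finset.sum_ite_eq', Finset.mul_sum] using h2
  have hS : ∑ j, v j = (2 * lam)⁻¹ := by
    have hlam' : (2 : ℝ) * lam ≠ 0 := by positivity
    have h3 : ∑ i, (b i - c)⁻¹ * w i = -1 := by linarith
    have : ∑ j, v j = -(2 * lam)⁻¹ * ∑ i, (b i - c)⁻¹ * w i := by
      rw [Finset.mul_sum]
      refine Finset.sum_congr rfl fun j _ => ?_
      rw [hv j]
      field_simp [w]
      rw [show b j - c = -(c - b j) by ring, div_neg, neg_neg]; simp only [w]
      ring
    rw [this, h3]; ring
  constructor
  · funext i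
    have hvi : (c - b i) * v i = a i * Real.sqrt (b i) := by
      rw [hv i, mul_div_cancel₀ _ (hcb' i)]
    have hlam' : (2 : ℝ) * lam ≠ 0 := by positivity
    have : M.mulVec v i = b i * v i + w i * ∑ j, v j := by
      simp only [Matrix.mulVec, dotProduct, hM]
      simp [add_mul, ite_mul, Finset.sum_add_distrib, Finset.sum_ite_eq, Finset.mul_sum, w,
        mul_assoc]
    rw [this, hS]
    have : w i * (2 * lam)⁻¹ = a i * Real.sqrt (b i) := by
      field_simp [w]; ring
    rw [this]
    simp only [Pi.smul_apply, smul_eq_mul]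
    linarith [hvi]
  · intro h0
    have := congrFun h0 ⟨0, hn⟩
    rw [hv] at this
    have hnum : a ⟨0, hn⟩ * Real.sqrt (b ⟨0, hn⟩) ≠ 0 :=
      ne_of_gt (mul_pos (ha _) (Real.sqrt_pos.mpr (hb _)))
    exact hnum (by
      have := div_eq_zero_iff.mp this
      rcases this with h | h
      · exact h
      · exact absurd h (hcb' _))
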